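/- On ℝ⁴ with coordinates (σ, τ, p_σ, p_τ), σ² + τ² > 0, the Hamiltonian H = (p_σ² + p_τ² + τ⁴ − σ⁴)/(σ² + τ²) Poisson-commutes with K₁ = (σ²(p_τ² + τ⁴) − τ²(p_σ² − σ⁴))/(σ² + τ²). -/
import Mathlib


/-- Canonical Poisson bracket on ℝⁿ × ℝⁿ (positions, momenta). -/
noncomputable def pb {n : ℕ} (f g : (Fin n → ℝ) × (Fin n → ℝ) → ℝ) :
    (Fin n → ℝ) × (Fin n → ℝ) → ℝ :=
  fun z => ∑ i, (fderiv ℝ f z (Pi.single i 1, 0) * fderiv ℝ g z (0, Pi.single i 1)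
    - fderiv ℝ f z (0, Pi.single i 1) * fderiv ℝ g z (Pi.single i 1, 0))

/-- coordinate CLMs -/
noncomputable def XX (i : Fin 2) : ((Fin 2 → ℝ) × (Fin 2 → ℝ)) →L[ℝ] ℝ :=
  (ContinuousLinearMap.proj i).comp (ContinuousLinearMap.fst ℝ (Fin 2 → ℝ) (Fin 2 → ℝ))

noncomputable def PP (i : Fin 2) : ((Fin 2 → ℝ) × (Fin 2 → ℝ)) →L[ℝ] ℝ :=
  (ContinuousLinearMap.proj i).comp (ContinuousLinearMap.snd ℝ (Fin 2 → ℝ) (Fin 2 → ℝ))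

@[simp] lemma XX_apply (i : Fin 2) (w : (Fin 2 → ℝ) × (Fin 2 → ℝ)) : XX i w = w.1 i := rfl
@[simp] lemma PP_apply (i : Fin 2) (w : (Fin 2 → ℝ) × (Fin 2 → ℝ)) : PP i w = w.2 i := rfl

set_option maxHeartbeats 2000000 in
/-- Rotational-parabolic Hamiltonian H = (p_σ² + p_τ² + τ⁴ − σ⁴)/(σ² + τ²)
Poisson-commutes with K₁ = (σ²(p_τ² + τ⁴) − τ²(p_σ² − σ⁴))/(σ² + τ²), away from
σ = τ = 0. Coordinates: σ = z.1 0, τ = z.1 1, p_σ = z.2 0, p_τ = z.2 1. -/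
theorem stmt9 :
    ∀ z : (Fin 2 → ℝ) × (Fin 2 → ℝ), 0 < (z.1 0) ^ 2 + (z.1 1) ^ 2 →
    pb (fun w => ((w.2 0) ^ 2 + (w.2 1) ^ 2 + (w.1 1) ^ 4 - (w.1 0) ^ 4)
          / ((w.1 0) ^ 2 + (w.1 1) ^ 2))
       (fun w => ((w.1 0) ^ 2 * ((w.2 1) ^ 2 + (w.1 1) ^ 4)
          - (w.1 1) ^ 2 * ((w.2 0) ^ 2 - (w.1 0) ^ 4))
          / ((w.1 0) ^ 2 + (w.1 1) ^ 2)) z = 0 := by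
  intro z hz
  have hD : (z.1 0) ^ 2 + (z.1 1) ^ 2 ≠ 0 := ne_of_gt hz
  have hx0 : HasFDerivAt (fun w : (Fin 2 → ℝ) × (Fin 2 → ℝ) => w.1 0) (XX 0) z :=
    (XX 0).hasFDerivAt
  have hx1 : HasFDerivAt (fun w : (Fin 2 → ℝ) × (Fin 2 → ℝ) => w.1 1) (XX 1) z :=
    (XX 1).hasFDerivAt
  have hp0 : HasFDerivAt (fun w : (Fin 2 → ℝ) × (Fin 2 → ℝ) => w.2 0) (PP 0) z :=
    (PP 0).hasFDerivAt
  have hp1 : HasFDerivAt (fun w : (Fin 2 → ℝ) × (Fin 2 → ℝ) => w.2 1) (PP 1) z :=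
    (PP 1).hasFDerivAt
  have hx0two := (hasDerivAt_pow 2 (z.1 0)).comp_hasFDerivAt z hx0
  have hx1two := (hasDerivAt_pow 2 (z.1 1)).comp_hasFDerivAt z hx1
  have hx0four := (hasDerivAt_pow 4 (z.1 0)).comp_hasFDerivAt z hx0
  have hx1four := (hasDerivAt_pow 4 (z.1 1)).comp_hasFDerivAt z hx1
  have hp0two := (hasDerivAt_pow 2 (z.2 0)).comp_hasFDerivAt z hp0
  have hp1two := (hasDerivAt_pow 2 (z.2 1)).comp_hasFDerivAt z hp1
  have hden := hx0two.add hx1two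
  have hinv := (hasDerivAt_inv hD).comp_hasFDerivAt z hden
  obtain ⟨L1, hL1, e11, e12, e13, e14⟩ :
      ∃ L : ((Fin 2 → ℝ) × (Fin 2 → ℝ)) →L[ℝ] ℝ,
        HasFDerivAt (fun w : (Fin 2 → ℝ) × (Fin 2 → ℝ) =>
            ((w.2 0) ^ 2 + (w.2 1) ^ 2 + (w.1 1) ^ 4 - (w.1 0) ^ 4)
              / ((w.1 0) ^ 2 + (w.1 1) ^ 2)) L z ∧
        L (Pi.single 0 1, 0) =
          -(((z.2 0) ^ 2 + (z.2 1) ^ 2 + (z.1 1) ^ 4 - (z.1 0) ^ 4) * (2 * z.1 0))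
            / ((z.1 0) ^ 2 + (z.1 1) ^ 2) ^ 2
          - 4 * (z.1 0) ^ 3 / ((z.1 0) ^ 2 + (z.1 1) ^ 2) ∧
        L (Pi.single 1 1, 0) =
          -(((z.2 0) ^ 2 + (z.2 1) ^ 2 + (z.1 1) ^ 4 - (z.1 0) ^ 4) * (2 * z.1 1))
            / ((z.1 0) ^ 2 + (z.1 1) ^ 2) ^ 2
          + 4 * (z.1 1) ^ 3 / ((z.1 0) ^ 2 + (z.1 1) ^ 2) ∧
        L (0, Pi.single 0 1) = 2 * z.2 0 / ((z.1 0) ^ 2 + (z.1 1) ^ 2) ∧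
        L (0, Pi.single 1 1) = 2 * z.2 1 / ((z.1 0) ^ 2 + (z.1 1) ^ 2) := by
    refine ⟨_, (((hp0two.add hp1two).add hx1four).sub hx0four).mul hinv, ?_, ?_, ?_, ?_⟩ <;>
    · simp [Pi.single_apply]
      try field_simp
      try ring
      try tauto
  obtain ⟨L2, hL2, e21, e22, e23, e24⟩ :
      ∃ L : ((Fin 2 → ℝ) × (Fin 2 → ℝ)) →L[ℝ] ℝ,
        HasFDerivAt (fun w : (Fin 2 → ℝ) × (Fin 2 → ℝ) =>
            ((w.1 0) ^ 2 * ((w.2 1) ^ 2 + (w.1 1) ^ 4)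
              - (w.1 1) ^ 2 * ((w.2 0) ^ 2 - (w.1 0) ^ 4))
              / ((w.1 0) ^ 2 + (w.1 1) ^ 2)) L z ∧
        L (Pi.single 0 1, 0) =
          -(((z.1 0) ^ 2 * ((z.2 1) ^ 2 + (z.1 1) ^ 4)
              - (z.1 1) ^ 2 * ((z.2 0) ^ 2 - (z.1 0) ^ 4)) * (2 * z.1 0))
            / ((z.1 0) ^ 2 + (z.1 1) ^ 2) ^ 2
          + (2 * z.1 0 * ((z.2 1) ^ 2 + (z.1 1) ^ 4) + 4 * (z.1 0) ^ 3 * (z.1 1) ^ 2)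
            / ((z.1 0) ^ 2 + (z.1 1) ^ 2) ∧
        L (Pi.single 1 1, 0) =
          -(((z.1 0) ^ 2 * ((z.2 1) ^ 2 + (z.1 1) ^ 4)
              - (z.1 1) ^ 2 * ((z.2 0) ^ 2 - (z.1 0) ^ 4)) * (2 * z.1 1))
            / ((z.1 0) ^ 2 + (z.1 1) ^ 2) ^ 2
          + (4 * (z.1 0) ^ 2 * (z.1 1) ^ 3 - 2 * z.1 1 * ((z.2 0) ^ 2 - (z.1 0) ^ 4))
            / ((z.1 0) ^ 2 + (z.1 1) ^ 2) ∧
        L (0, Pi.single 0 1) =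
          -(2 * (z.1 1) ^ 2 * z.2 0) / ((z.1 0) ^ 2 + (z.1 1) ^ 2) ∧
        L (0, Pi.single 1 1) =
          2 * (z.1 0) ^ 2 * z.2 1 / ((z.1 0) ^ 2 + (z.1 1) ^ 2) := by
    refine ⟨_, ((hx0two.mul (hp1two.add hx1four)).sub
      (hx1two.mul (hp0two.sub hx0four))).mul hinv, ?_, ?_, ?_, ?_⟩ <;>
    · simp [Pi.single_apply]
      try field_simp
      try ring
      try tauto
  simp only [pb, Fin.sum_univ_two]
  rw [hL1.fderiv, hL2.fderiv, e11, e12, e13, e14, e21, e22, e23, e24]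
  field_simp
  ring
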